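/- Let Δ and Π be p×p matrices partitioned into I×I blocks with weights w_{kℓ} > 0. Then ‖Δ‖₁,₁* - ‖Δ + Π‖₁,₁* + ‖Π‖₁,₁* ≤ 2√(Σ_{(k,ℓ)∈J₂(Π)} w_{kℓ}²) · ‖Δ‖_F, where ‖A‖₁,₁* = Σ_{k,ℓ} w_{kℓ}‖A^{kℓ}‖_F and J₂(Π) is the set of block indices (k,ℓ) with Π^{kℓ} ≠ 0. -/

import Mathlib

open BigOperators Matrix
open scoped Classical

noncomputable def enorm {p : ℕ} (v : Fin p → ℝ) : ℝ := Real.sqrt (∑ i, (v i) ^ 2)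

noncomputable def fnorm {p : ℕ} (A : Matrix (Fin p) (Fin p) ℝ) : ℝ :=
  Real.sqrt (∑ i, ∑ j, (A i j) ^ 2)

def outer {p : ℕ} (u v : Fin p → ℝ) : Matrix (Fin p) (Fin p) ℝ :=
  Matrix.of fun i j => u i * v j

noncomputable def bnorm {p I : ℕ} (g : Fin p → Fin I) (A : Matrix (Fin p) (Fin p) ℝ)
    (k l : Fin I) : ℝ :=
  Real.sqrt (∑ i, ∑ j, if g i = k ∧ g j = l then (A i j) ^ 2 else 0)

noncomputable def l11star {p I : ℕ} (g : Fin p → Fin I) (w : Fin I → Fin I → ℝ)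
    (A : Matrix (Fin p) (Fin p) ℝ) : ℝ :=
  ∑ k, ∑ l, w k l * bnorm g A k l

noncomputable def blkVec {p I : ℕ} (g : Fin p → Fin I) (A : Matrix (Fin p) (Fin p) ℝ)
    (k l : Fin I) : EuclideanSpace ℝ (Fin p × Fin p) :=
  WithLp.toLp 2 fun ij : Fin p × Fin p => if g ij.1 = k ∧ g ij.2 = l then A ij.1 ij.2 else 0

lemma bnorm_eq_norm {p I : ℕ} (g : Fin p → Fin I) (A : Matrix (Fin p) (Fin p) ℝ)
    (k l : Fin I) : bnorm g A k l = ‖blkVec g A k l‖ := by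
  rw [EuclideanSpace.norm_eq, bnorm]
  congr 1
  rw [Fintype.sum_prod_type]
  refine Finset.sum_congr rfl fun i _ => Finset.sum_congr rfl fun j _ => ?_
  by_cases h : g i = k ∧ g j = l <;> simp [blkVec, h, sq_abs]

lemma blkVec_add {p I : ℕ} (g : Fin p → Fin I) (A B : Matrix (Fin p) (Fin p) ℝ)
    (k l : Fin I) : blkVec g (A + B) k l = blkVec g A k l + blkVec g B k l := by
  ext ij
  by_cases h : g ij.1 = k ∧ g ij.2 = l <;>
    simp [blkVec, h, Matrix.add_apply]

lemma bnorm_nonneg {p I : ℕ} (g : Fin p → Fin I) (A : Matrix (Fin p) (Fin p) ℝ)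
    (k l : Fin I) : 0 ≤ bnorm g A k l := Real.sqrt_nonneg _

lemma bnorm_sq {p I : ℕ} (g : Fin p → Fin I) (A : Matrix (Fin p) (Fin p) ℝ)
    (k l : Fin I) :
    (bnorm g A k l) ^ 2 = ∑ i, ∑ j, if g i = k ∧ g j = l then (A i j) ^ 2 else 0 := by
  rw [bnorm, Real.sq_sqrt]
  positivity

theorem stmt3 {p I : ℕ} (g : Fin p → Fin I) (w : Fin I → Fin I → ℝ)
    (hw : ∀ k l, 0 < w k l) (Δ Pm : Matrix (Fin p) (Fin p) ℝ) :
    l11star g w Δ - l11star g w (Δ + Pm) + l11star g w Pm ≤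
      2 * Real.sqrt (∑ k, ∑ l, if bnorm g Pm k l ≠ 0 then (w k l) ^ 2 else 0) * fnorm Δ := by
  -- pointwise bound
  have key : ∀ k l, w k l * bnorm g Δ k l - w k l * bnorm g (Δ + Pm) k l
      + w k l * bnorm g Pm k l ≤
      (if bnorm g Pm k l ≠ 0 then w k l else 0) * (2 * bnorm g Δ k l) := by
    intro k l
    by_cases h : bnorm g Pm k l = 0
    · have hz : blkVec g Pm k l = 0 := by
        have := bnorm_eq_norm g Pm k l
        rw [h] at this
        exact (norm_eq_zero.mp this.symm)
      have he : bnorm g (Δ + Pm) k l = bnorm g Δ k l := by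
        rw [bnorm_eq_norm, bnorm_eq_norm, blkVec_add, hz, add_zero]
      simp [h, he]
    · have tri : bnorm g Pm k l ≤ bnorm g Δ k l + bnorm g (Δ + Pm) k l := by
        rw [bnorm_eq_norm, bnorm_eq_norm, bnorm_eq_norm]
        have : blkVec g Pm k l = blkVec g (Δ + Pm) k l - blkVec g Δ k l := by
          rw [blkVec_add]; abel
        rw [this]
        simpa [add_comm] using norm_sub_le (blkVec g (Δ + Pm) k l) (blkVec g Δ k l)
      rw [if_pos h]
      nlinarith [(hw k l).le, bnorm_nonneg g (Δ + Pm) k l]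
  -- sum the pointwise bound
  have step1 : l11star g w Δ - l11star g w (Δ + Pm) + l11star g w Pm ≤
      ∑ k, ∑ l, (if bnorm g Pm k l ≠ 0 then w k l else 0) * (2 * bnorm g Δ k l) := by
    rw [l11star, l11star, l11star, ← Finset.sum_sub_distrib, ← Finset.sum_add_distrib]
    refine Finset.sum_le_sum fun k _ => ?_
    rw [← Finset.sum_sub_distrib, ← Finset.sum_add_distrib]
    exact Finset.sum_le_sum fun l _ => key k l
  refine step1.trans ?_
  -- Cauchy-Schwarz
  set f : Fin I × Fin I → ℝ := fun kl => if bnorm g Pm kl.1 kl.2 ≠ 0 then w kl.1 kl.2 else 0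
  set b : Fin I × Fin I → ℝ := fun kl => bnorm g Δ kl.1 kl.2
  have hrw : ∑ k, ∑ l, (if bnorm g Pm k l ≠ 0 then w k l else 0) * (2 * bnorm g Δ k l)
      = 2 * ∑ kl : Fin I × Fin I, f kl * b kl := by
    conv_rhs => rw [Finset.mul_sum, Fintype.sum_prod_type]
    refine Finset.sum_congr rfl fun k _ => ?_
    refine Finset.sum_congr rfl fun l _ => ?_
    show _ = 2 * (f (k, l) * b (k, l))
    simp only [f, b]; ring
  rw [hrw]
  have hb : ∀ kl : Fin I × Fin I, 0 ≤ b kl := fun kl => bnorm_nonneg g Δ kl.1 kl.2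
  have hfn : ∀ kl : Fin I × Fin I, 0 ≤ f kl := by
    intro kl; dsimp only [f]; split
    exacts [(hw kl.1 kl.2).le, le_rfl]
  have hb2 : ∑ kl : Fin I × Fin I, b kl ^ 2 = (fnorm Δ) ^ 2 := by
    have pt : ∀ ij : Fin p × Fin p,
        (∑ kl : Fin I × Fin I, if g ij.1 = kl.1 ∧ g ij.2 = kl.2 then (Δ ij.1 ij.2) ^ 2 else 0)
          = (Δ ij.1 ij.2) ^ 2 := by
      intro ij
      refine (Finset.sum_eq_single (g ij.1, g ij.2) ?_ ?_).trans (by simp)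
      · intro b _ hb
        rw [if_neg]
        rintro ⟨h1, h2⟩
        exact hb (by ext <;> simp [h1.symm, h2.symm])
      · intro h; exact absurd (Finset.mem_univ _) h
    have h1 : ∀ kl : Fin I × Fin I, b kl ^ 2 =
        ∑ ij : Fin p × Fin p, if g ij.1 = kl.1 ∧ g ij.2 = kl.2 then (Δ ij.1 ij.2) ^ 2 else 0 := by
      intro kl; rw [Fintype.sum_prod_type]; exact bnorm_sq g Δ kl.1 kl.2
    simp_rw [h1]
    rw [Finset.sum_comm]
    simp_rw [pt]
    rw [fnorm, Real.sq_sqrt (by positivity)]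
    exact Fintype.sum_prod_type _
  have hf2 : ∑ kl : Fin I × Fin I, f kl ^ 2
      = ∑ k, ∑ l, if bnorm g Pm k l ≠ 0 then (w k l) ^ 2 else 0 := by
    rw [Fintype.sum_prod_type]
    refine Finset.sum_congr rfl fun k _ => Finset.sum_congr rfl fun l _ => ?_
    by_cases h : bnorm g Pm k l ≠ 0 <;> simp [f, h]
  have hcs : ∑ kl : Fin I × Fin I, f kl * b kl ≤
      Real.sqrt (∑ kl : Fin I × Fin I, f kl ^ 2) * fnorm Δ := by
    have h := Finset.sum_mul_sq_le_sq_mul_sq Finset.univ f b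
    have hnn : 0 ≤ ∑ kl : Fin I × Fin I, f kl * b kl :=
      Finset.sum_nonneg fun kl _ => mul_nonneg (hfn kl) (hb kl)
    calc ∑ kl : Fin I × Fin I, f kl * b kl
        = Real.sqrt ((∑ kl : Fin I × Fin I, f kl * b kl) ^ 2) := (Real.sqrt_sq hnn).symm
      _ ≤ Real.sqrt ((∑ kl : Fin I × Fin I, f kl ^ 2) * ∑ kl : Fin I × Fin I, b kl ^ 2) :=
          Real.sqrt_le_sqrt h
      _ = Real.sqrt (∑ kl : Fin I × Fin I, f kl ^ 2) *
            Real.sqrt (∑ kl : Fin I × Fin I, b kl ^ 2) := by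
          rw [Real.sqrt_mul (by positivity)]
      _ = Real.sqrt (∑ kl : Fin I × Fin I, f kl ^ 2) * fnorm Δ := by
          have hfnn : (0:ℝ) ≤ fnorm Δ := Real.sqrt_nonneg _
          rw [hb2, Real.sqrt_sq hfnn]
  calc 2 * ∑ kl : Fin I × Fin I, f kl * b kl
      ≤ 2 * (Real.sqrt (∑ kl : Fin I × Fin I, f kl ^ 2) * fnorm Δ) := by linarith
    _ = 2 * Real.sqrt (∑ k, ∑ l, if bnorm g Pm k l ≠ 0 then (w k l) ^ 2 else 0) * fnorm Δ := by
        rw [hf2]; ring
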